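/- Let α = 0.9616 and define κ̂(ŝ) = (1 − ŝ)ŝ·ln(ŝ/(1 − ŝ)) / (α(ŝ + 8)·ln((ŝ + 8)/8)) + 3/5 for ŝ ∈ [1/2, 1). Then κ̂(ŝ) < 1 for all ŝ ∈ [1/2, 1). -/

import Mathlib

open Real

/-- amortized decay rate bound, case `d = 4`, `d₂ = 3`. -/
theorem kappa_d2_three_lt_one :
    ∀ s : ℝ, 1 / 2 ≤ s → s < 1 →
      (1 - s) * s * Real.log (s / (1 - s)) /
        ((0.9616 : ℝ) * (s + 8) * Real.log ((s + 8) / 8)) + 3 / 5 < 1 := by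
  intro s hs hs1
  have hspos : (0:ℝ) < s := by linarith
  have hy : (0:ℝ) < 1 - s := by linarith
  have h8 : (0:ℝ) < s + 8 := by linarith
  -- lower bound for log((s+8)/8)
  have hm : s / (s + 8) ≤ Real.log ((s + 8) / 8) := by
    have h1 : Real.log (8 / (s + 8)) ≤ 8 / (s + 8) - 1 :=
      Real.log_le_sub_one_of_pos (by positivity)
    have h2 : Real.log (8 / (s + 8)) = - Real.log ((s + 8) / 8) := by
      rw [← Real.log_inv]
      congr 1
      field_simp
    rw [h2] at h1
    have h3 : 1 - 8 / (s + 8) = s / (s + 8) := by field_simp; ring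
    linarith
  have hmpos : 0 < Real.log ((s + 8) / 8) := by
    apply Real.log_pos
    rw [lt_div_iff₀ (by norm_num : (0:ℝ) < 8)]
    linarith
  have hD : 0 < (0.9616 : ℝ) * (s + 8) * Real.log ((s + 8) / 8) := by positivity
  -- key bound : (1-s) * (-log(1-s)) ≤ 1/e
  have hkey : (1 - s) * (-Real.log (1 - s)) ≤ (Real.exp 1)⁻¹ := by
    have h1 : Real.log ((1 - s)⁻¹ / Real.exp 1) ≤ (1 - s)⁻¹ / Real.exp 1 - 1 :=
      Real.log_le_sub_one_of_pos (by positivity)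
    rw [Real.log_div (by positivity) (Real.exp_ne_zero 1), Real.log_inv, Real.log_exp] at h1
    -- h1 : -log(1-s) - 1 ≤ (1-s)⁻¹ / exp 1 - 1
    have h2 : -Real.log (1 - s) ≤ (1 - s)⁻¹ / Real.exp 1 := by linarith
    have h3 := mul_le_mul_of_nonneg_left h2 hy.le
    have h4 : (1 - s) * ((1 - s)⁻¹ / Real.exp 1) = (Real.exp 1)⁻¹ := by
      field_simp
    linarith [h3, h4.le]
  -- numerator bound
  have hlogs : Real.log s ≤ 0 := Real.log_nonpos hspos.le (by linarith)
  have hlogdiv : Real.log (s / (1 - s)) = Real.log s - Real.log (1 - s) :=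
    Real.log_div (ne_of_gt hspos) (ne_of_gt hy)
  have hN : (1 - s) * s * Real.log (s / (1 - s)) ≤ s * (Real.exp 1)⁻¹ := by
    rw [hlogdiv]
    have h5 : (1 - s) * s * (Real.log s - Real.log (1 - s))
        ≤ (1 - s) * s * (-Real.log (1 - s)) := by
      apply mul_le_mul_of_nonneg_left (by linarith) (by positivity)
    have h6 : (1 - s) * s * (-Real.log (1 - s)) = s * ((1 - s) * (-Real.log (1 - s))) := by
      ring
    have h7 : s * ((1 - s) * (-Real.log (1 - s))) ≤ s * (Real.exp 1)⁻¹ :=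
      mul_le_mul_of_nonneg_left hkey hspos.le
    linarith
  -- exp 1 > 2.7
  have hexp : (2.7:ℝ) < Real.exp 1 := by
    have := Real.exp_one_gt_d9
    linarith
  have hexppos : (0:ℝ) < Real.exp 1 := Real.exp_pos 1
  have hinv : (Real.exp 1)⁻¹ < 0.38464 := by
    rw [inv_lt_comm₀ (by positivity) (by norm_num)]
    calc (0.38464:ℝ)⁻¹ < 2.7 := by norm_num
    _ < Real.exp 1 := hexp
  -- main inequality
  have hmain : (1 - s) * s * Real.log (s / (1 - s)) <
      2 / 5 * ((0.9616 : ℝ) * (s + 8) * Real.log ((s + 8) / 8)) := by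
    have hr : (0.38464:ℝ) * s ≤ 2 / 5 * ((0.9616 : ℝ) * (s + 8) * Real.log ((s + 8) / 8)) := by
      have := mul_le_mul_of_nonneg_left hm (mul_pos (by norm_num : (0:ℝ) < 0.38464) h8).le
      have he : 0.38464 * (s + 8) * (s / (s + 8)) = 0.38464 * s := by field_simp
      nlinarith [this]
    have hl : s * (Real.exp 1)⁻¹ < 0.38464 * s := by nlinarith
    linarith
  have hdivlt : (1 - s) * s * Real.log (s / (1 - s)) /
      ((0.9616 : ℝ) * (s + 8) * Real.log ((s + 8) / 8)) < 2 / 5 := by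
    rw [div_lt_iff₀ hD]
    linarith
  linarith
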